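/- Let A be a partial H-module algebra. Then the partial smash product A#H := (A⊗H-with-smash-multiplication)(1_A⊗1_H), with multiplication (a#h)(b#g) = Σ a(h₁·b) # h₂g, is an associative unital algebra with identity 1_A#1_H, and the map f: A → A#H, a ↦ a#1_H, is an injective algebra homomorphism. -/

import Mathlib

open TensorProduct

noncomputable section

variable (k : Type*) [Field k]

/-- The "Sweedler sum" `h ↦ Σ f(h₁) * g(h₂)`. -/
def sweedler {H A : Type*} [Ring H] [HopfAlgebra k H]
    [Ring A] [Algebra k A] (f g : H →ₗ[k] A) : H →ₗ[k] A :=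
  (LinearMap.mul' k A) ∘ₗ (TensorProduct.map f g) ∘ₗ Coalgebra.comul

/-- A (left) partial `H`-module algebra structure on a unital algebra `A`:
`1_H · a = a`, `h · (ab) = Σ (h₁·a)(h₂·b)` and `h·(g·b) = Σ (h₁·1)((h₂ g)·b)`. -/
structure PartialModuleAlgebra (H A : Type*) [Ring H] [HopfAlgebra k H]
    [Ring A] [Algebra k A] where
  act : H →ₗ[k] A →ₗ[k] A
  one_act : ∀ a : A, act 1 a = a
  act_mul : ∀ (h : H) (a b : A),
    act h (a * b) = sweedler k (act.flip a) (act.flip b) h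
  act_act : ∀ (h g : H) (b : A),
    act h (act g b) =
      sweedler k (act.flip 1) ((act.flip b) ∘ₗ LinearMap.mulRight k g) h

variable {H A : Type*} [Ring H] [HopfAlgebra k H] [Ring A] [Algebra k A]
lemma sweedler_repr (f g : H →ₗ[k] A) {h : H} (r : Coalgebra.Repr k h (H × H)) :
    sweedler k f g h = ∑ i ∈ r.index, f (r.left i) * g (r.right i) := by
  simp only [sweedler, LinearMap.comp_apply, ← r.eq, map_sum, TensorProduct.map_tmul,
    LinearMap.mul'_apply]


/-- `μ` realizes the smash-product multiplication on `A ⊗ H`: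
`(a # h)(b # g) = Σ a(h₁·b) # h₂ g`. -/
def SmashMulFormula (ξ : PartialModuleAlgebra k H A)
    (μ : (A ⊗[k] H) →ₗ[k] (A ⊗[k] H) →ₗ[k] (A ⊗[k] H)) : Prop :=
  ∀ (a b : A) (h g : H),
    μ (a ⊗ₜ[k] h) (b ⊗ₜ[k] g) =
      (TensorProduct.map ((LinearMap.mulLeft k a) ∘ₗ ξ.act.flip b)
        (LinearMap.mulRight k g)) (Coalgebra.comul h)

variable (ξ : PartialModuleAlgebra k H A)

lemma actR (b : A) : sweedler k (ξ.act.flip b) (ξ.act.flip (1 : A)) = ξ.act.flip b := by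
  ext h
  have := (ξ.act_mul h b 1).symm
  rw [mul_one] at this
  simpa using this

lemma actL (b : A) : sweedler k (ξ.act.flip (1 : A)) (ξ.act.flip b) = ξ.act.flip b := by
  ext h
  have := (ξ.act_act h 1 b).symm
  rw [ξ.one_act, LinearMap.mulRight_one, LinearMap.comp_id] at this
  simpa using this

variable {μ : (A ⊗[k] H) →ₗ[k] (A ⊗[k] H) →ₗ[k] (A ⊗[k] H)}

lemma mu_repr (hμ : SmashMulFormula k ξ μ) (a b : A) (h g : H) (r : Coalgebra.Repr k h (H × H)) :
    μ (a ⊗ₜ[k] h) (b ⊗ₜ[k] g)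
      = ∑ i ∈ r.index, (a * ξ.act (r.left i) b) ⊗ₜ[k] (r.right i * g) := by
  rw [hμ, ← r.eq]
  simp [map_sum]

lemma mu_one_tmul (hμ : SmashMulFormula k ξ μ) (b : A) (g : H) :
    μ ((1 : A) ⊗ₜ[k] (1 : H)) (b ⊗ₜ[k] g) = b ⊗ₜ[k] g := by
  rw [hμ]
  rw [Bialgebra.comul_one, Algebra.TensorProduct.one_def]
  simp [ξ.one_act]

lemma mu_one_left (hμ : SmashMulFormula k ξ μ) (x : A ⊗[k] H) :
    μ ((1 : A) ⊗ₜ[k] (1 : H)) x = x := by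
  induction x using TensorProduct.induction_on with
  | zero => simp
  | tmul b g => exact mu_one_tmul k ξ hμ b g
  | add u v hu hv => rw [map_add, hu, hv]

lemma mu_tmul_one (hμ : SmashMulFormula k ξ μ) (a : A) :
    μ (a ⊗ₜ[k] (1 : H)) ((1 : A) ⊗ₜ[k] (1 : H)) = a ⊗ₜ[k] (1 : H) := by
  rw [hμ, Bialgebra.comul_one, Algebra.TensorProduct.one_def]
  simp [ξ.one_act]

lemma mu_tmul_one_tmul_one (hμ : SmashMulFormula k ξ μ) (a b : A) :
    μ (a ⊗ₜ[k] (1 : H)) (b ⊗ₜ[k] (1 : H)) = (a * b) ⊗ₜ[k] (1 : H) := by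
  rw [hμ, Bialgebra.comul_one, Algebra.TensorProduct.one_def]
  simp [ξ.one_act]

/-- `x ⊗ (y ⊗ z) ↦ (f1 x * (f2 y * f3 z)) ⊗ t`. -/
def theta1 (f1 f2 f3 : H →ₗ[k] A) (t : H) : H ⊗[k] (H ⊗[k] H) →ₗ[k] A ⊗[k] H :=
  ((TensorProduct.mk k A H).flip t) ∘ₗ (LinearMap.mul' k A) ∘ₗ
    (TensorProduct.map f1 ((LinearMap.mul' k A) ∘ₗ TensorProduct.map f2 f3))

@[simp] lemma theta1_tmul (f1 f2 f3 : H →ₗ[k] A) (t : H) (x y z : H) :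
    theta1 k f1 f2 f3 t (x ⊗ₜ[k] (y ⊗ₜ[k] z)) = (f1 x * (f2 y * f3 z)) ⊗ₜ[k] t := by
  simp [theta1]

/-- `x ⊗ (y ⊗ z) ↦ (f1 x * f2 y) ⊗ f3 z`. -/
def theta2 (f1 f2 : H →ₗ[k] A) (f3 : H →ₗ[k] H) : H ⊗[k] (H ⊗[k] H) →ₗ[k] A ⊗[k] H :=
  (TensorProduct.map ((LinearMap.mul' k A) ∘ₗ TensorProduct.map f1 f2) f3) ∘ₗ
    (TensorProduct.assoc k H H H).symm.toLinearMap

@[simp] lemma theta2_tmul (f1 f2 : H →ₗ[k] A) (f3 : H →ₗ[k] H) (x y z : H) :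
    theta2 k f1 f2 f3 (x ⊗ₜ[k] (y ⊗ₜ[k] z)) = (f1 x * f2 y) ⊗ₜ[k] f3 z := by
  simp [theta2]

lemma coassoc_transport {M : Type*} [AddCommMonoid M] [Module k M]
    (Θ : H ⊗[k] (H ⊗[k] H) →ₗ[k] M) {h : H} (r : Coalgebra.Repr k h (H × H))
    (a₁ : (i : r.ι) → Coalgebra.Repr k (r.left i) (H × H))
    (a₂ : (i : r.ι) → Coalgebra.Repr k (r.right i) (H × H)) :
    ∑ i ∈ r.index, ∑ j ∈ (a₁ i).index,
        Θ ((a₁ i).left j ⊗ₜ[k] ((a₁ i).right j ⊗ₜ[k] r.right i))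
      = ∑ i ∈ r.index, ∑ j ∈ (a₂ i).index,
        Θ (r.left i ⊗ₜ[k] ((a₂ i).left j ⊗ₜ[k] (a₂ i).right j)) := by
  have h0 := Coalgebra.sum_tmul_tmul_eq r a₁ a₂
  have := congrArg Θ h0
  simpa [map_sum] using this

lemma mu_repr_mul (hμ : SmashMulFormula k ξ μ) (x c : A) (q g l : H)
    (rq : Coalgebra.Repr k q (H × H)) (rg : Coalgebra.Repr k g (H × H)) :
    μ (x ⊗ₜ[k] (q * g)) (c ⊗ₜ[k] l)
      = ∑ j ∈ rq.index, ∑ m ∈ rg.index,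
          (x * ξ.act (rq.left j * rg.left m) c) ⊗ₜ[k] ((rq.right j * rg.right m) * l) := by
  rw [hμ, Bialgebra.comul_mul, ← rq.eq, ← rg.eq, Finset.sum_mul_sum]
  simp [Algebra.TensorProduct.tmul_mul_tmul, map_sum]

lemma mu_assoc_tmul (hμ : SmashMulFormula k ξ μ) (a b c : A) (h g l : H)
    (rh : Coalgebra.Repr k h (H × H)) (rg : Coalgebra.Repr k g (H × H))
    (rp : (i : rh.ι) → Coalgebra.Repr k (rh.left i) (H × H))
    (rq : (i : rh.ι) → Coalgebra.Repr k (rh.right i) (H × H))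
    (rv : (i : rh.ι) → (j : (rp i).ι) → Coalgebra.Repr k ((rp i).left j) (H × H))
    (rw : (i : rh.ι) → (j : (rp i).ι) → Coalgebra.Repr k ((rp i).right j) (H × H)) :
    μ (μ (a ⊗ₜ[k] h) (b ⊗ₜ[k] g)) (c ⊗ₜ[k] l)
      = μ (a ⊗ₜ[k] h) (μ (b ⊗ₜ[k] g) (c ⊗ₜ[k] l)) := by
  classical
  -- the fully expanded left-hand side
  have eL : μ (μ (a ⊗ₜ[k] h) (b ⊗ₜ[k] g)) (c ⊗ₜ[k] l)
      = ∑ i ∈ rh.index, ∑ j ∈ (rq i).index, ∑ m ∈ rg.index,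
          ((a * ξ.act (rh.left i) b) * ξ.act ((rq i).left j * rg.left m) c)
            ⊗ₜ[k] (((rq i).right j * rg.right m) * l) := by
    rw [mu_repr k ξ hμ a b h g rh]
    simp only [map_sum, LinearMap.sum_apply]
    exact Finset.sum_congr rfl fun i _ => mu_repr_mul k ξ hμ _ c _ g l (rq i) rg
  -- first expansion of the right-hand side
  have eR1 : μ (a ⊗ₜ[k] h) (μ (b ⊗ₜ[k] g) (c ⊗ₜ[k] l))
      = ∑ m ∈ rg.index, ∑ i ∈ rh.index,
          (a * ξ.act (rh.left i) (b * ξ.act (rg.left m) c))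
            ⊗ₜ[k] (rh.right i * (rg.right m * l)) := by
    rw [mu_repr k ξ hμ b c g l rg, map_sum]
    exact Finset.sum_congr rfl fun m _ => mu_repr k ξ hμ a _ h _ rh
  -- expand the partial-action axioms inside the right-hand side
  have eR2 : μ (a ⊗ₜ[k] h) (μ (b ⊗ₜ[k] g) (c ⊗ₜ[k] l))
      = ∑ m ∈ rg.index, ∑ i ∈ rh.index, ∑ j ∈ (rp i).index, ∑ n ∈ (rw i j).index,
          ((a * ξ.act ((rp i).left j) b)
              * (ξ.act ((rw i j).left n) 1 * ξ.act ((rw i j).right n * rg.left m) c))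
            ⊗ₜ[k] (rh.right i * (rg.right m * l)) := by
    rw [eR1]
    refine Finset.sum_congr rfl fun m _ => Finset.sum_congr rfl fun i _ => ?_
    rw [ξ.act_mul (rh.left i) b (ξ.act (rg.left m) c), sweedler_repr k _ _ (rp i)]
    simp only [LinearMap.flip_apply]
    rw [Finset.mul_sum, TensorProduct.sum_tmul]
    refine Finset.sum_congr rfl fun j _ => ?_
    rw [ξ.act_act ((rp i).right j) (rg.left m) c, sweedler_repr k _ _ (rw i j)]
    simp only [LinearMap.comp_apply, LinearMap.flip_apply, LinearMap.mulRight_apply]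
    rw [Finset.mul_sum, Finset.mul_sum, TensorProduct.sum_tmul]
    refine Finset.sum_congr rfl fun n _ => ?_
    rw [← mul_assoc]
  -- collapse `Σ (v₁·b)(v₂·1) = (·b)` (axiom (R))
  have hcol : ∀ (x : H) (r' : Coalgebra.Repr k x (H × H)) (G : A) (t : H),
      (∑ n ∈ r'.index, ((a * ξ.act (r'.left n) b) * (ξ.act (r'.right n) 1 * G)) ⊗ₜ[k] t)
        = ((a * ξ.act x b) * G) ⊗ₜ[k] t := by
    intro x r' G t
    have h1 : ∑ n ∈ r'.index, ξ.act (r'.left n) b * ξ.act (r'.right n) 1 = ξ.act x b := by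
      have h2 := LinearMap.congr_fun (actR k ξ b) x
      rw [sweedler_repr k _ _ r'] at h2
      simpa using h2
    rw [← TensorProduct.sum_tmul]
    congr 1
    calc ∑ n ∈ r'.index, (a * ξ.act (r'.left n) b) * (ξ.act (r'.right n) 1 * G)
        = ∑ n ∈ r'.index, a * ((ξ.act (r'.left n) b * ξ.act (r'.right n) 1) * G) := by
          simp only [mul_assoc]
      _ = a * ((∑ n ∈ r'.index, ξ.act (r'.left n) b * ξ.act (r'.right n) 1) * G) := by
          rw [← Finset.mul_sum, ← Finset.sum_mul]
      _ = (a * ξ.act x b) * G := by rw [h1, mul_assoc]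
  -- step 1: use coassociativity and (R) to collapse the innermost double sum
  have eR3 : μ (a ⊗ₜ[k] h) (μ (b ⊗ₜ[k] g) (c ⊗ₜ[k] l))
      = ∑ m ∈ rg.index, ∑ i ∈ rh.index, ∑ j ∈ (rp i).index,
          ((a * ξ.act ((rp i).left j) b)
              * ξ.act ((rp i).right j * rg.left m) c)
            ⊗ₜ[k] (rh.right i * (rg.right m * l)) := by
    rw [eR2]
    refine Finset.sum_congr rfl fun m _ => Finset.sum_congr rfl fun i _ => ?_
    have key := coassoc_transport k
      (theta1 k ((LinearMap.mulLeft k a) ∘ₗ ξ.act.flip b) (ξ.act.flip (1 : A))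
        ((ξ.act.flip c) ∘ₗ LinearMap.mulRight k (rg.left m))
        (rh.right i * (rg.right m * l)))
      (rp i) (rv i) (rw i)
    calc ∑ j ∈ (rp i).index, ∑ n ∈ (rw i j).index,
          ((a * ξ.act ((rp i).left j) b)
              * (ξ.act ((rw i j).left n) 1 * ξ.act ((rw i j).right n * rg.left m) c))
            ⊗ₜ[k] (rh.right i * (rg.right m * l))
        = ∑ j ∈ (rp i).index, ∑ n ∈ (rw i j).index,
            (theta1 k ((LinearMap.mulLeft k a) ∘ₗ ξ.act.flip b) (ξ.act.flip (1 : A))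
              ((ξ.act.flip c) ∘ₗ LinearMap.mulRight k (rg.left m))
              (rh.right i * (rg.right m * l)))
              ((rp i).left j ⊗ₜ[k] ((rw i j).left n ⊗ₜ[k] (rw i j).right n)) := by
          simp [theta1_tmul]
      _ = ∑ j ∈ (rp i).index, ∑ n ∈ (rv i j).index,
            (theta1 k ((LinearMap.mulLeft k a) ∘ₗ ξ.act.flip b) (ξ.act.flip (1 : A))
              ((ξ.act.flip c) ∘ₗ LinearMap.mulRight k (rg.left m))
              (rh.right i * (rg.right m * l)))
              ((rv i j).left n ⊗ₜ[k] ((rv i j).right n ⊗ₜ[k] (rp i).right j)) := key.symm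
      _ = ∑ j ∈ (rp i).index,
            ((a * ξ.act ((rp i).left j) b) * ξ.act ((rp i).right j * rg.left m) c)
              ⊗ₜ[k] (rh.right i * (rg.right m * l)) := by
          refine Finset.sum_congr rfl fun j _ => ?_
          simp only [theta1_tmul, LinearMap.comp_apply, LinearMap.flip_apply,
            LinearMap.mulLeft_apply, LinearMap.mulRight_apply]
          exact hcol ((rp i).left j) (rv i j) _ _
  -- step 2: use coassociativity once more to move `Δ` to the other leg
  have eR4 : μ (a ⊗ₜ[k] h) (μ (b ⊗ₜ[k] g) (c ⊗ₜ[k] l))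
      = ∑ m ∈ rg.index, ∑ i ∈ rh.index, ∑ j ∈ (rq i).index,
          ((a * ξ.act (rh.left i) b) * ξ.act ((rq i).left j * rg.left m) c)
            ⊗ₜ[k] ((rq i).right j * (rg.right m * l)) := by
    rw [eR3]
    refine Finset.sum_congr rfl fun m _ => ?_
    have key := coassoc_transport k
      (theta2 k ((LinearMap.mulLeft k a) ∘ₗ ξ.act.flip b)
        ((ξ.act.flip c) ∘ₗ LinearMap.mulRight k (rg.left m))
        (LinearMap.mulRight k (rg.right m * l)))
      rh rp rq
    calc ∑ i ∈ rh.index, ∑ j ∈ (rp i).index,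
          ((a * ξ.act ((rp i).left j) b) * ξ.act ((rp i).right j * rg.left m) c)
            ⊗ₜ[k] (rh.right i * (rg.right m * l))
        = ∑ i ∈ rh.index, ∑ j ∈ (rp i).index,
            (theta2 k ((LinearMap.mulLeft k a) ∘ₗ ξ.act.flip b)
              ((ξ.act.flip c) ∘ₗ LinearMap.mulRight k (rg.left m))
              (LinearMap.mulRight k (rg.right m * l)))
              ((rp i).left j ⊗ₜ[k] ((rp i).right j ⊗ₜ[k] rh.right i)) := by
          simp [theta2_tmul, mul_assoc]
      _ = ∑ i ∈ rh.index, ∑ j ∈ (rq i).index,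
            (theta2 k ((LinearMap.mulLeft k a) ∘ₗ ξ.act.flip b)
              ((ξ.act.flip c) ∘ₗ LinearMap.mulRight k (rg.left m))
              (LinearMap.mulRight k (rg.right m * l)))
              (rh.left i ⊗ₜ[k] ((rq i).left j ⊗ₜ[k] (rq i).right j)) := key
      _ = ∑ i ∈ rh.index, ∑ j ∈ (rq i).index,
            ((a * ξ.act (rh.left i) b) * ξ.act ((rq i).left j * rg.left m) c)
              ⊗ₜ[k] ((rq i).right j * (rg.right m * l)) := by
          simp [theta2_tmul, mul_assoc]
  rw [eL, eR4]
  rw [Finset.sum_comm]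
  refine Finset.sum_congr rfl fun i _ => ?_
  rw [Finset.sum_comm]
  refine Finset.sum_congr rfl fun j _ => Finset.sum_congr rfl fun m _ => ?_
  simp [mul_assoc]

lemma mu_assoc (hμ : SmashMulFormula k ξ μ) (x y z : A ⊗[k] H) :
    μ (μ x y) z = μ x (μ y z) := by
  induction x using TensorProduct.induction_on with
  | zero => simp
  | add u v hu hv => simp [map_add, LinearMap.add_apply, hu, hv]
  | tmul a h =>
    induction y using TensorProduct.induction_on with
    | zero => simp
    | add u v hu hv => simp [map_add, LinearMap.add_apply, hu, hv]
    | tmul b g =>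
      induction z using TensorProduct.induction_on with
      | zero => simp
      | add u v hu hv => simp [map_add, hu, hv]
      | tmul c l =>
        exact mu_assoc_tmul k ξ hμ a b c h g l
          (Coalgebra.Repr.arbitrary k h) (Coalgebra.Repr.arbitrary k g)
          (fun i => Coalgebra.Repr.arbitrary k _)
          (fun i => Coalgebra.Repr.arbitrary k _)
          (fun i j => Coalgebra.Repr.arbitrary k _)
          (fun i j => Coalgebra.Repr.arbitrary k _)

lemma f_eq (hμ : SmashMulFormula k ξ μ) (a : A) :
    μ (a ⊗ₜ[k] (1 : H)) ((1 : A) ⊗ₜ[k] (1 : H)) = a ⊗ₜ[k] (1 : H) :=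
  mu_tmul_one k ξ hμ a

/-- The partial smash product `A # H = (A ⊗ H)(1_A ⊗ 1_H)` is an associative algebra with
identity `1_A # 1_H`, and `a ↦ a # 1_H` is an injective algebra homomorphism into it. -/
theorem smash_assoc_unital (ξ : PartialModuleAlgebra k H A)
    (μ : (A ⊗[k] H) →ₗ[k] (A ⊗[k] H) →ₗ[k] (A ⊗[k] H)) (hμ : SmashMulFormula k ξ μ) :
    -- the corner subspace `S = (A ⊗ H)(1_A ⊗ 1_H)`
    let e : A ⊗[k] H := (1 : A) ⊗ₜ[k] (1 : H)
    let S : Submodule k (A ⊗[k] H) := LinearMap.range (μ.flip e)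
    let f : A → A ⊗[k] H := fun a => μ (a ⊗ₜ[k] (1 : H)) e
    -- `S` is closed under multiplication
    (∀ x ∈ S, ∀ y ∈ S, μ x y ∈ S) ∧
    -- associativity
    (∀ x ∈ S, ∀ y ∈ S, ∀ z ∈ S, μ (μ x y) z = μ x (μ y z)) ∧
    -- `e = 1_A # 1_H` is a two-sided identity of `S`
    e ∈ S ∧ (∀ x ∈ S, μ x e = x ∧ μ e x = x) ∧
    -- `f : a ↦ a # 1_H` is an injective algebra map into `S`
    (∀ a : A, f a ∈ S) ∧ Function.Injective f ∧
    (∀ a b : A, f (a * b) = μ (f a) (f b)) ∧ f 1 = e := by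
  intro e S f
  have hee : μ e e = e := mu_one_left k ξ hμ e
  have hflip : ∀ x : A ⊗[k] H, μ.flip e x = μ x e := fun x => rfl
  refine ⟨?_, ?_, ?_, ?_, ?_, ?_, ?_, ?_⟩
  · rintro x ⟨u, rfl⟩ y ⟨v, rfl⟩
    refine ⟨μ (μ.flip e u) v, ?_⟩
    simp only [LinearMap.flip_apply]
    exact mu_assoc k ξ hμ _ v e
  · intro x _ y _ z _
    exact mu_assoc k ξ hμ x y z
  · exact ⟨e, hee⟩
  · rintro x ⟨u, rfl⟩
    constructor
    · show μ (μ u e) e = μ u e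
      rw [mu_assoc k ξ hμ u e e, hee]
    · exact mu_one_left k ξ hμ _
  · intro a
    exact ⟨a ⊗ₜ[k] (1 : H), rfl⟩
  · intro a b hab
    simp only [f, e, mu_tmul_one k ξ hμ] at hab
    have := congrArg ((TensorProduct.rid k A).toLinearMap ∘ₗ LinearMap.lTensor A (Coalgebra.counit (R := k))) hab
    simpa using this
  · intro a b
    show μ ((a * b) ⊗ₜ[k] (1 : H)) e = μ (μ (a ⊗ₜ[k] 1) e) (μ (b ⊗ₜ[k] 1) e)
    rw [mu_tmul_one k ξ hμ a, mu_tmul_one k ξ hμ b, mu_tmul_one k ξ hμ (a * b),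
      mu_tmul_one_tmul_one k ξ hμ a b]
  · exact hee
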